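/- The L² norm computation for the Farey wavelet: with ψ(x) = K₀·((1/3)φ(2x) − φ(2x−1) + (1/3)φ(2x−2)) where φ is the modified Farey scaling function and K₀ = (4log2−2)/√(3−4log2), one has ‖ψ‖₂² = 1. -/

import Mathlib

open MeasureTheory Real

/-- The modified Farey scaling function. -/
noncomputable def fareyPhi (x : ℝ) : ℝ :=
  if -1 ≤ x ∧ x ≤ 0 then (1 / (4 * Real.log 2 - 2)) * ((1 + x) / (1 - x))
  else if 0 ≤ x ∧ x ≤ 1 then (1 / (4 * Real.log 2 - 2)) * ((1 - x) / (1 + x))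
  else 0

/-- The Farey mother wavelet expressed through the two-scale combination. -/
noncomputable def fareyPsi (x : ℝ) : ℝ :=
  ((4 * Real.log 2 - 2) / Real.sqrt (3 - 4 * Real.log 2)) *
    ((1/3) * fareyPhi (2*x) - fareyPhi (2*x - 1) + (1/3) * fareyPhi (2*x - 2))

lemma farey_d_pos : (0:ℝ) < 3 - 4 * Real.log 2 := by
  have := Real.log_two_lt_d9; linarith

lemma farey_c_pos : (0:ℝ) < 4 * Real.log 2 - 2 := by
  have := Real.log_two_gt_d9; linarith

lemma fareyPhi_eq (x : ℝ) :
    fareyPhi x = if |x| ≤ 1 then (1 / (4 * Real.log 2 - 2)) * ((1 - |x|) / (1 + |x|)) else 0 := by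
  unfold fareyPhi
  rcases lt_or_ge x (-1) with h | h
  · rw [if_neg (by rintro ⟨h1, _⟩; linarith), if_neg (by rintro ⟨h1, _⟩; linarith),
      if_neg (by rw [abs_of_nonpos (by linarith)]; push_neg; linarith)]
  · rcases le_or_gt x 0 with h0 | h0
    · rw [if_pos ⟨h, h0⟩, if_pos (by rw [abs_of_nonpos h0]; linarith), abs_of_nonpos h0]
      ring_nf
    · rcases le_or_gt x 1 with h1 | h1
      · rw [if_neg (by rintro ⟨_, h2⟩; linarith), if_pos ⟨h0.le, h1⟩,
          if_pos (by rw [abs_of_pos h0]; linarith), abs_of_pos h0]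
      · rw [if_neg (by rintro ⟨_, h2⟩; linarith), if_neg (by rintro ⟨_, h2⟩; linarith),
          if_neg (by rw [abs_of_pos (by linarith)]; push_neg; linarith)]

lemma fareyPhi_neg (x : ℝ) : fareyPhi (-x) = fareyPhi x := by
  rw [fareyPhi_eq, fareyPhi_eq, abs_neg]

lemma fareyPhi_zero (x : ℝ) (hx : 1 ≤ |x|) : fareyPhi x = 0 := by
  rw [fareyPhi_eq]
  split_ifs with h
  · rw [le_antisymm h hx]; norm_num
  · rfl

lemma fareyPsi_symm (x : ℝ) : fareyPsi (1 - x) = fareyPsi x := by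
  unfold fareyPsi
  have e1 : fareyPhi (2*(1-x)) = fareyPhi (2*x - 2) := by
    rw [show 2*(1-x) = -(2*x - 2) by ring, fareyPhi_neg]
  have e2 : fareyPhi (2*(1-x) - 1) = fareyPhi (2*x - 1) := by
    rw [show 2*(1-x) - 1 = -(2*x - 1) by ring, fareyPhi_neg]
  have e3 : fareyPhi (2*(1-x) - 2) = fareyPhi (2*x) := by
    rw [show 2*(1-x) - 2 = -(2*x) by ring, fareyPhi_neg]
  rw [e1, e2, e3]
  ring

lemma farey_key (u : ℝ) :
    ((4 * Real.log 2 - 2) / Real.sqrt (3 - 4 * Real.log 2) * (1 / (4 * Real.log 2 - 2) * u))^2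
      = 1 / (3 - 4 * Real.log 2) * u^2 := by
  rw [mul_pow, div_pow, Real.sq_sqrt farey_d_pos.le, mul_pow, div_pow]
  have h1 := farey_c_pos.ne'
  have h2 := farey_d_pos.ne'
  field_simp

noncomputable def fareyGA (x : ℝ) : ℝ :=
  1 / (3 - 4 * Real.log 2) * (1/3 * ((1 + 2*x) / (1 - 2*x)))^2

noncomputable def fareyFA (x : ℝ) : ℝ :=
  1 / (3 - 4 * Real.log 2) * (1/9 * (2/(1 - 2*x) + 2 * Real.log (1 - 2*x) + x))

noncomputable def fareyGB (x : ℝ) : ℝ :=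
  1 / (3 - 4 * Real.log 2) * (1/3 * ((1 - 2*x) / (1 + 2*x)) - 2*x/(2 - 2*x))^2

noncomputable def fareyFB (x : ℝ) : ℝ :=
  1 / (3 - 4 * Real.log 2) *
    (1/9 * (-2/(1 + 2*x) - 2 * Real.log (1 + 2*x) + x)
      - 2/3 * (x - 1/3 * Real.log (1 + 2*x) + 1/3 * Real.log (1 - x))
      + (1/(1 - x) + 2 * Real.log (1 - x) + x))

lemma fareyPsi_eqOn_A :
    Set.EqOn (fun x => fareyPsi x ^ 2) fareyGA (Set.uIcc (-(1/2) : ℝ) 0) := by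
  intro x hx
  rw [Set.uIcc_of_le (by norm_num : (-(1/2):ℝ) ≤ 0)] at hx
  obtain ⟨hx1, hx2⟩ := hx
  show fareyPsi x ^ 2 = _
  unfold fareyPsi fareyGA
  rw [fareyPhi_zero (2*x - 1) (by rw [abs_of_nonpos (by linarith)]; linarith),
    fareyPhi_zero (2*x - 2) (by rw [abs_of_nonpos (by linarith)]; linarith),
    fareyPhi_eq (2*x), if_pos (by rw [abs_of_nonpos (by linarith)]; linarith),
    abs_of_nonpos (show 2*x ≤ 0 by linarith),
    show (1:ℝ) - -(2*x) = 1 + 2*x by ring, show (1:ℝ) + -(2*x) = 1 - 2*x by ring,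
    show (1:ℝ)/3 * (1 / (4 * Real.log 2 - 2) * ((1 + 2*x) / (1 - 2*x))) - 0 + 1/3 * 0
        = 1 / (4 * Real.log 2 - 2) * (1/3 * ((1 + 2*x) / (1 - 2*x))) by ring,
    farey_key]

lemma fareyPsi_eqOn_B :
    Set.EqOn (fun x => fareyPsi x ^ 2) fareyGB (Set.uIcc (0:ℝ) (1/2)) := by
  intro x hx
  rw [Set.uIcc_of_le (by norm_num : (0:ℝ) ≤ 1/2)] at hx
  obtain ⟨hx1, hx2⟩ := hx
  show fareyPsi x ^ 2 = _
  unfold fareyPsi fareyGB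
  rw [fareyPhi_zero (2*x - 2) (by rw [abs_of_nonpos (by linarith)]; linarith),
    fareyPhi_eq (2*x), if_pos (by rw [abs_of_nonneg (by linarith)]; linarith),
    abs_of_nonneg (show (0:ℝ) ≤ 2*x by linarith),
    fareyPhi_eq (2*x - 1), if_pos (by rw [abs_of_nonpos (by linarith)]; linarith),
    abs_of_nonpos (show 2*x - 1 ≤ 0 by linarith),
    show (1:ℝ) - -(2*x - 1) = 2*x by ring, show (1:ℝ) + -(2*x - 1) = 2 - 2*x by ring,
    show (1:ℝ)/3 * (1 / (4 * Real.log 2 - 2) * ((1 - 2*x) / (1 + 2*x)))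
          - 1 / (4 * Real.log 2 - 2) * (2*x / (2 - 2*x)) + 1/3 * 0
        = 1 / (4 * Real.log 2 - 2) * (1/3 * ((1 - 2*x) / (1 + 2*x)) - 2*x/(2 - 2*x)) by ring,
    farey_key]

lemma fareyFA_deriv {x : ℝ} (hx : x < 1/2) : HasDerivAt fareyFA (fareyGA x) x := by
  have h12 : (0:ℝ) < 1 - 2*x := by linarith
  have hlin : HasDerivAt (fun y : ℝ => 1 - 2*y) (-2) x := by
    simpa using ((hasDerivAt_id' x).const_mul 2).const_sub 1
  have h2 : HasDerivAt (fun y : ℝ => 2/(1 - 2*y)) ((0*(1 - 2*x) - 2*(-2))/(1 - 2*x)^2) x :=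
    (hasDerivAt_const x (2:ℝ)).div hlin h12.ne'
  have h3 : HasDerivAt (fun y : ℝ => Real.log (1 - 2*y)) ((-2)/(1 - 2*x)) x :=
    hlin.log h12.ne'
  have h4 := (((h2.add (h3.const_mul 2)).add (hasDerivAt_id x)).const_mul
    ((1:ℝ)/9)).const_mul ((1:ℝ) / (3 - 4 * Real.log 2))
  unfold fareyFA fareyGA
  refine h4.congr_deriv ?_
  have hd := farey_d_pos.ne'
  field_simp
  ring

lemma fareyFB_deriv {x : ℝ} (hx1 : -(1/2) < x) (hx2 : x < 1) : HasDerivAt fareyFB (fareyGB x) x := by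
  have h12 : (0:ℝ) < 1 + 2*x := by linarith
  have h1x : (0:ℝ) < 1 - x := by linarith
  have hlin : HasDerivAt (fun y : ℝ => 1 + 2*y) (2) x := by
    simpa using ((hasDerivAt_id' x).const_mul 2).const_add 1
  have hlin2 : HasDerivAt (fun y : ℝ => 1 - y) (-1) x := by
    simpa using (hasDerivAt_id' x).const_sub 1
  have hq1 : HasDerivAt (fun y : ℝ => -2/(1 + 2*y)) ((0*(1 + 2*x) - (-2)*2)/(1 + 2*x)^2) x :=
    (hasDerivAt_const x (-2:ℝ)).div hlin h12.ne'
  have hq2 : HasDerivAt (fun y : ℝ => Real.log (1 + 2*y)) (2/(1 + 2*x)) x :=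
    hlin.log h12.ne'
  have hq3 : HasDerivAt (fun y : ℝ => Real.log (1 - y)) ((-1)/(1 - x)) x :=
    hlin2.log h1x.ne'
  have hq4 : HasDerivAt (fun y : ℝ => 1/(1 - y)) ((0*(1 - x) - 1*(-1))/(1 - x)^2) x :=
    (hasDerivAt_const x (1:ℝ)).div hlin2 h1x.ne'
  have hi1 := ((hq1.sub (hq2.const_mul 2)).add (hasDerivAt_id x)).const_mul ((1:ℝ)/9)
  have hi2 := (((hasDerivAt_id x).sub (hq2.const_mul ((1:ℝ)/3))).add
      (hq3.const_mul ((1:ℝ)/3))).const_mul ((2:ℝ)/3)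
  have hi3 := (hq4.add (hq3.const_mul 2)).add (hasDerivAt_id x)
  have h4 := ((hi1.sub hi2).add hi3).const_mul ((1:ℝ) / (3 - 4 * Real.log 2))
  unfold fareyFB fareyGB
  refine h4.congr_deriv ?_
  have hd := farey_d_pos.ne'
  have h2x : (0:ℝ) < 2 - 2*x := by linarith
  field_simp
  ring

lemma fareyGA_cont : ContinuousOn fareyGA (Set.uIcc (-(1/2):ℝ) 0) := by
  rw [Set.uIcc_of_le (by norm_num : (-(1/2):ℝ) ≤ 0)]
  unfold fareyGA
  apply ContinuousOn.mul continuousOn_const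
  apply ContinuousOn.pow
  apply ContinuousOn.mul continuousOn_const
  exact ContinuousOn.div (by fun_prop) (by fun_prop)
    (fun x hx => ne_of_gt (by have := hx.2; simp only [Set.mem_Icc] at hx; linarith [hx.2]))

lemma fareyGB_cont : ContinuousOn fareyGB (Set.uIcc (0:ℝ) (1/2)) := by
  rw [Set.uIcc_of_le (by norm_num : (0:ℝ) ≤ 1/2)]
  unfold fareyGB
  apply ContinuousOn.mul continuousOn_const
  apply ContinuousOn.pow
  apply ContinuousOn.sub
  · apply ContinuousOn.mul continuousOn_const
    exact ContinuousOn.div (by fun_prop) (by fun_prop)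
      (fun x hx => ne_of_gt (by simp only [Set.mem_Icc] at hx; linarith [hx.1]))
  · exact ContinuousOn.div (by fun_prop) (by fun_prop)
      (fun x hx => ne_of_gt (by simp only [Set.mem_Icc] at hx; linarith [hx.2]))

lemma fareyGA_int : ∫ x in (-(1/2):ℝ)..0, fareyGA x = 1/18 := by
  have hderiv : ∀ x ∈ Set.uIcc (-(1/2):ℝ) 0, HasDerivAt fareyFA (fareyGA x) x := by
    intro x hx
    rw [Set.uIcc_of_le (by norm_num : (-(1/2):ℝ) ≤ 0)] at hx
    exact fareyFA_deriv (by linarith [hx.2])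
  rw [intervalIntegral.integral_eq_sub_of_hasDerivAt hderiv fareyGA_cont.intervalIntegrable]
  unfold fareyFA
  rw [show (1:ℝ) - 2*0 = 1 by norm_num, show (1:ℝ) - 2*(-(1/2)) = 2 by norm_num, Real.log_one]
  have hd := farey_d_pos.ne'
  field_simp
  ring

lemma fareyGB_int : ∫ x in (0:ℝ)..(1/2), fareyGB x = 4/9 := by
  have hderiv : ∀ x ∈ Set.uIcc (0:ℝ) (1/2), HasDerivAt fareyFB (fareyGB x) x := by
    intro x hx
    rw [Set.uIcc_of_le (by norm_num : (0:ℝ) ≤ 1/2)] at hx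
    exact fareyFB_deriv (by linarith [hx.1]) (by linarith [hx.2])
  rw [intervalIntegral.integral_eq_sub_of_hasDerivAt hderiv fareyGB_cont.intervalIntegrable]
  unfold fareyFB
  rw [show (1:ℝ) + 2*(1/2) = 2 by norm_num, show (1:ℝ) - 1/2 = 2⁻¹ by norm_num,
    show (1:ℝ) + 2*0 = 1 by norm_num, show (1:ℝ) - 0 = 1 by norm_num,
    Real.log_inv, Real.log_one]
  have hd := farey_d_pos.ne'
  field_simp
  ring

theorem fareyPsi_L2_norm : ∫ x : ℝ, (fareyPsi x)^2 = 1 := by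
  have hsupport : ∀ x ∉ Set.Ioc (-(1/2):ℝ) (3/2), fareyPsi x ^ 2 = 0 := by
    intro x hx
    rw [Set.mem_Ioc, not_and_or] at hx
    have hzero : fareyPsi x = 0 := by
      unfold fareyPsi
      rcases hx with hx | hx
      · push_neg at hx
        rw [fareyPhi_zero (2*x) (le_abs.mpr (Or.inr (by linarith))),
          fareyPhi_zero (2*x - 1) (le_abs.mpr (Or.inr (by linarith))),
          fareyPhi_zero (2*x - 2) (le_abs.mpr (Or.inr (by linarith)))]
        ring
      · push_neg at hx
        rw [fareyPhi_zero (2*x) (le_abs.mpr (Or.inl (by linarith))),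
          fareyPhi_zero (2*x - 1) (le_abs.mpr (Or.inl (by linarith))),
          fareyPhi_zero (2*x - 2) (le_abs.mpr (Or.inl (by linarith)))]
        ring
    rw [hzero]; ring
  have iA : IntervalIntegrable (fun x => fareyPsi x ^ 2) volume (-(1/2)) 0 :=
    (fareyGA_cont.congr fareyPsi_eqOn_A).intervalIntegrable
  have iB : IntervalIntegrable (fun x => fareyPsi x ^ 2) volume 0 (1/2) :=
    (fareyGB_cont.congr fareyPsi_eqOn_B).intervalIntegrable
  have iAB : IntervalIntegrable (fun x => fareyPsi x ^ 2) volume (-(1/2)) (1/2) := iA.trans iB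
  have iC : IntervalIntegrable (fun x => fareyPsi x ^ 2) volume (1/2) (3/2) := by
    have h := iAB.comp_sub_left 1
    simp only [fareyPsi_symm] at h
    rw [show (1:ℝ) - -(1/2) = 3/2 by norm_num, show (1:ℝ) - 1/2 = 1/2 by norm_num] at h
    exact h.symm
  have vA : ∫ x in (-(1/2):ℝ)..0, fareyPsi x ^ 2 = 1/18 := by
    rw [intervalIntegral.integral_congr fareyPsi_eqOn_A]
    exact fareyGA_int
  have vB : ∫ x in (0:ℝ)..(1/2), fareyPsi x ^ 2 = 4/9 := by
    rw [intervalIntegral.integral_congr fareyPsi_eqOn_B]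
    exact fareyGB_int
  have split2 : ∫ x in (-(1/2):ℝ)..(1/2), fareyPsi x ^ 2
      = (∫ x in (-(1/2):ℝ)..0, fareyPsi x ^ 2) + ∫ x in (0:ℝ)..(1/2), fareyPsi x ^ 2 :=
    (intervalIntegral.integral_add_adjacent_intervals iA iB).symm
  have vC : ∫ x in ((1:ℝ)/2)..(3/2), fareyPsi x ^ 2 = ∫ x in (-(1/2):ℝ)..(1/2), fareyPsi x ^ 2 := by
    have h := intervalIntegral.integral_comp_sub_left (a := -(1/2)) (b := 1/2)
      (fun y => fareyPsi y ^ 2) 1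
    simp only [fareyPsi_symm] at h
    rw [show (1:ℝ) - -(1/2) = 3/2 by norm_num, show (1:ℝ) - 1/2 = 1/2 by norm_num] at h
    exact h.symm
  calc ∫ x : ℝ, fareyPsi x ^ 2
      = ∫ x in (-(1/2):ℝ)..(3/2), fareyPsi x ^ 2 := by
        rw [intervalIntegral.integral_of_le (by norm_num : (-(1/2):ℝ) ≤ 3/2)]
        exact (setIntegral_eq_integral_of_forall_compl_eq_zero hsupport).symm
    _ = (∫ x in (-(1/2):ℝ)..(1/2), fareyPsi x ^ 2) + ∫ x in ((1:ℝ)/2)..(3/2), fareyPsi x ^ 2 :=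
        (intervalIntegral.integral_add_adjacent_intervals iAB iC).symm
    _ = 1 := by rw [vC, split2, vA, vB]; norm_num
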